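/- Let f : 𝕆 → 𝕆 be a real-linear map on the octonions satisfying f(x·q) = q·f(x) for all octonions q and x. Then f = 0. -/

import Mathlib

noncomputable section

/-- The octonions, realized as the Cayley–Dickson double of the quaternions. -/
abbrev 𝕆 : Type := Quaternion ℝ × Quaternion ℝ

/-- Octonion multiplication via the Cayley–Dickson formula
`(a,b)(c,d) = (ac - d̄b, da + bc̄)`. -/
def omul (x y : 𝕆) : 𝕆 :=
  (x.1 * y.1 - star y.2 * x.2, y.2 * x.1 + x.2 * star y.1)

/-- Octonionic conjugation. -/
def oconj (x : 𝕆) : 𝕆 := (star x.1, -x.2)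

/-- The octonion `1`. -/
def oone : 𝕆 := (1, 0)

/-- Real part of an octonion. -/
def ore (x : 𝕆) : ℝ := x.1.re

/-- Embedding of the reals into the octonions. -/
def oreal (r : ℝ) : 𝕆 := ((r : Quaternion ℝ), 0)

/-- Squared norm of an octonion. -/
def onormSq (x : 𝕆) : ℝ := ore (omul x (oconj x))

set_option maxHeartbeats 1000000 in
lemma aux_c_eq_zero (a b : Quaternion ℝ)
    (key : ∀ x q : 𝕆, omul (omul x q) (a, b) = omul q (omul x (a, b))) :
    a = 0 ∧ b = 0 := by
  obtain ⟨qi, hi1, hi2, hi3, hi4⟩ : ∃ q : Quaternion ℝ, q.re = 0 ∧ q.imI = 1 ∧ q.imJ = 0 ∧ q.imK = 0 :=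
    ⟨⟨0,1,0,0⟩, rfl, rfl, rfl, rfl⟩
  obtain ⟨qj, hj1, hj2, hj3, hj4⟩ : ∃ q : Quaternion ℝ, q.re = 0 ∧ q.imI = 0 ∧ q.imJ = 1 ∧ q.imK = 0 :=
    ⟨⟨0,0,1,0⟩, rfl, rfl, rfl, rfl⟩
  obtain ⟨qk, hk1, hk2, hk3, hk4⟩ : ∃ q : Quaternion ℝ, q.re = 0 ∧ q.imI = 0 ∧ q.imJ = 0 ∧ q.imK = 1 :=
    ⟨⟨0,0,0,1⟩, rfl, rfl, rfl, rfl⟩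
  have e1 := key (qi, 0) (qj, 0)
  have e2 := key (0, 1) (qi, 0)
  have e3 := key (0, 1) (qj, 0)
  have e4 := key (0, 1) (qk, 0)
  simp only [omul, Prod.ext_iff, Quaternion.ext_iff, Quaternion.re_mul,
    Quaternion.imI_mul, Quaternion.imJ_mul, Quaternion.imK_mul,
    Quaternion.re_star, Quaternion.imI_star, Quaternion.imJ_star, Quaternion.imK_star,
    Quaternion.re_sub, Quaternion.imI_sub, Quaternion.imJ_sub, Quaternion.imK_sub,
    Quaternion.re_add, Quaternion.imI_add, Quaternion.imJ_add, Quaternion.imK_add,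
    Quaternion.re_zero, Quaternion.imI_zero, Quaternion.imJ_zero, Quaternion.imK_zero,
    Quaternion.re_one, Quaternion.imI_one, Quaternion.imJ_one, Quaternion.imK_one,
    hi1, hi2, hi3, hi4, hj1, hj2, hj3, hj4, hk1, hk2, hk3, hk4]
    at e1 e2 e3 e4
  norm_num at e1 e2 e3 e4
  obtain ⟨g1, g2, g3, g4⟩ := e1
  obtain ⟨⟨g5, g6⟩, g7, g8⟩ := e2
  obtain ⟨⟨g9, g10⟩, g11, g12⟩ := e3
  obtain ⟨⟨g13, g14⟩, g15, g16⟩ := e4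
  refine ⟨?_, ?_⟩ <;> ext <;>
    simp only [Quaternion.re_zero, Quaternion.imI_zero, Quaternion.imJ_zero,
      Quaternion.imK_zero] <;>
    linarith

/-- Any real-linear map f on the octonions with f(x*q) = q*f(x) is zero. -/
theorem stmt_1 (f : 𝕆 →ₗ[ℝ] 𝕆)
    (hf : ∀ q x : 𝕆, f (omul x q) = omul q (f x)) :
    f = 0 := by
  have h1 : ∀ q : 𝕆, f q = omul q (f oone) := by
    intro q
    have := hf q oone
    simpa [omul, oone] using this
  have key : ∀ x q : 𝕆, omul (omul x q) (f oone) = omul q (omul x (f oone)) := by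
    intro x q
    have := hf q x
    rw [h1 (omul x q), h1 x] at this
    exact this
  have hc0 : f oone = 0 := by
    have := aux_c_eq_zero (f oone).1 (f oone).2 (by simpa using key)
    exact Prod.ext this.1 this.2
  apply LinearMap.ext
  intro x
  rw [h1 x, hc0]
  simp [omul]
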